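/- Let k ≥ 4 be an integer and let f(u) := (k²/2) sin(2u). For λ, μ > 0 define G_{λ,μ}(r) := f(Q_λ(r) - Q_μ(r)) - f(Q_λ(r)) + f(Q_μ(r)) - 4 (r/μ)^k ΛQ_λ(r)² - 4 (r/λ)^{-k} ΛQ_μ(r)². Then for each α ∈ {1, 2, 3} there is a constant C > 0 such that for all λ, μ > 0 with ν := λ/μ ≤ 1/2: (∫₀^∞ r^{-2α} G_{λ,μ}(r)² r dr)^{1/2} ≤ C ν^{2k} λ^{1-α}. -/

import Mathlib

open MeasureTheory Set Filter

noncomputable section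

/-- The `k`-equivariant harmonic map profile `Q(r) = 2 arctan(r^k)`. -/
def Qfun (k : ℕ) (r : ℝ) : ℝ := 2 * Real.arctan (r ^ k)

/-- `ΛQ(r) = 2k r^k / (1 + r^{2k})`. -/
def LamQ (k : ℕ) (r : ℝ) : ℝ := 2 * k * r ^ k / (1 + r ^ (2 * k))

/-- `f(u) = (k²/2) sin(2u)`. -/
def fNL (k : ℕ) (u : ℝ) : ℝ := (k : ℝ) ^ 2 / 2 * Real.sin (2 * u)

/-- `G_{λ,μ}(r) = f(Q_λ - Q_μ) - f(Q_λ) + f(Q_μ) - 4 (r/μ)^k (ΛQ_λ)² - 4 (r/λ)^{-k} (ΛQ_μ)²`. -/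
def Gfun (k : ℕ) (lam mu : ℝ) (r : ℝ) : ℝ :=
  fNL k (Qfun k (r / lam) - Qfun k (r / mu)) - fNL k (Qfun k (r / lam)) + fNL k (Qfun k (r / mu))
    - 4 * (r / mu) ^ k * LamQ k (r / lam) ^ 2
    - 4 * (r / lam) ^ (-(k : ℤ)) * LamQ k (r / mu) ^ 2

lemma sin_two_arctan (v : ℝ) : Real.sin (2 * Real.arctan v) = 2 * v / (1 + v ^ 2) := by
  have h0 : (0:ℝ) < 1 + v ^ 2 := by positivity
  have hs : Real.sqrt (1 + v ^ 2) * Real.sqrt (1 + v ^ 2) = 1 + v ^ 2 :=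
    Real.mul_self_sqrt h0.le
  have hs0 : Real.sqrt (1 + v ^ 2) ≠ 0 := by positivity
  rw [Real.sin_two_mul, Real.sin_arctan, Real.cos_arctan]
  field_simp
  rw [Real.sq_sqrt h0.le]

lemma cos_two_arctan (v : ℝ) : Real.cos (2 * Real.arctan v) = (1 - v ^ 2) / (1 + v ^ 2) := by
  have h0 : (0:ℝ) < 1 + v ^ 2 := by positivity
  have hs0 : Real.sqrt (1 + v ^ 2) ≠ 0 := by positivity
  rw [Real.cos_two_mul, Real.cos_arctan, div_pow, one_pow, Real.sq_sqrt h0.le]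
  field_simp
  ring

lemma sin_four_arctan (v : ℝ) :
    Real.sin (2 * (2 * Real.arctan v)) = 4 * v * (1 - v ^ 2) / (1 + v ^ 2) ^ 2 := by
  have h0 : (0:ℝ) < 1 + v ^ 2 := by positivity
  rw [Real.sin_two_mul, sin_two_arctan, cos_two_arctan]
  field_simp
  ring

lemma cos_four_arctan (v : ℝ) :
    Real.cos (2 * (2 * Real.arctan v)) = ((1 + v ^ 2) ^ 2 - 8 * v ^ 2) / (1 + v ^ 2) ^ 2 := by
  have h0 : (0:ℝ) < 1 + v ^ 2 := by positivity
  rw [Real.cos_two_mul, cos_two_arctan]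
  field_simp
  ring

/-- Closed rational form of `G`. -/
lemma Gfun_eq (k : ℕ) {lam mu r : ℝ} (hl : 0 < lam) (hm : 0 < mu) (hr : 0 < r) :
    Gfun k lam mu r =
      -16 * (k:ℝ)^2 * (((r/mu)^k)^2 / ((r/lam)^k)) *
        ((((r/lam)^k)^3 * ((r/mu)^k) * (3 + ((r/mu)^k)^2) + 1 + 3*((r/lam)^k)^2)
        / ((1 + ((r/lam)^k)^2)^2 * (1 + ((r/mu)^k)^2)^2)) := by
  have hx : 0 < (r/lam)^k := by positivity
  have hy : 0 < (r/mu)^k := by positivity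
  unfold Gfun fNL Qfun LamQ
  rw [show (r/lam)^(2*k) = ((r/lam)^k)^2 by rw [mul_comm, pow_mul],
      show (r/mu)^(2*k) = ((r/mu)^k)^2 by rw [mul_comm, pow_mul],
      show (r/lam) ^ (-(k:ℤ)) = ((r/lam)^k)⁻¹ by rw [zpow_neg, zpow_natCast]]
  set x := (r/lam)^k with hxdef
  set y := (r/mu)^k with hydef
  rw [mul_sub, Real.sin_sub, sin_four_arctan, cos_four_arctan, sin_four_arctan, cos_four_arctan]
  have h1 : (0:ℝ) < 1 + x^2 := by positivity
  have h2 : (0:ℝ) < 1 + y^2 := by positivity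
  field_simp
  ring

/-- Pointwise bound on `|G|`. -/
lemma Gfun_bound (k : ℕ) {lam mu r : ℝ} (hl : 0 < lam) (hm : 0 < mu) (hr : 0 < r) :
    |Gfun k lam mu r| ≤ 16*(k:ℝ)^2*((lam/mu)^k)^2 *
      (3 * ((r/lam)^k/(1+((r/lam)^k)^2)) + 4 * ((r/mu)^k/(1+((r/mu)^k)^2))) := by
  have hx : 0 < (r/lam)^k := by positivity
  have ht : 0 < (lam/mu)^k := by positivity
  have hyx : (r/mu)^k = (lam/mu)^k * (r/lam)^k := by
    rw [← mul_pow]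
    congr 1
    field_simp
  rw [Gfun_eq k hl hm hr]
  set x := (r/lam)^k with hxd
  set y := (r/mu)^k with hyd
  set t := (lam/mu)^k with htd
  have hy : 0 < y := by rw [hyx]; exact mul_pos ht hx
  have h1 : (0:ℝ) < 1 + x^2 := by positivity
  have h2 : (0:ℝ) < 1 + y^2 := by positivity
  have hD : (0:ℝ) < (1+x^2)^2*(1+y^2)^2 := by positivity
  have hN : (0:ℝ) < x^3*y*(3+y^2) + 1 + 3*x^2 := by
    have h3 : (0:ℝ) < 3 + y^2 := by positivity
    nlinarith [mul_pos (mul_pos (pow_pos hx 3) hy) h3, sq_nonneg x]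
  have habs : |(-16 * (k:ℝ)^2 * (y^2/x) *
        ((x^3*y*(3+y^2) + 1 + 3*x^2) / ((1+x^2)^2*(1+y^2)^2)))|
      = 16*(k:ℝ)^2*(y^2/x) * ((x^3*y*(3+y^2) + 1 + 3*x^2) / ((1+x^2)^2*(1+y^2)^2)) := by
    rw [show -16 * (k:ℝ)^2 * (y^2/x) *
        ((x^3*y*(3+y^2) + 1 + 3*x^2) / ((1+x^2)^2*(1+y^2)^2))
      = -(16 * (k:ℝ)^2 * (y^2/x) *
        ((x^3*y*(3+y^2) + 1 + 3*x^2) / ((1+x^2)^2*(1+y^2)^2))) by ring, abs_neg,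
      abs_of_nonneg]
    have hq1 : (0:ℝ) ≤ y^2/x := le_of_lt (div_pos (pow_pos hy 2) hx)
    have hq2 : (0:ℝ) ≤ (x^3*y*(3+y^2) + 1 + 3*x^2) / ((1+x^2)^2*(1+y^2)^2) :=
      le_of_lt (div_pos hN hD)
    have hq3 : (0:ℝ) ≤ 16*(k:ℝ)^2 := by positivity
    exact mul_nonneg (mul_nonneg hq3 hq1) hq2
  rw [habs]
  have hyx2 : y^2/x = t^2*x := by
    rw [hyx]
    field_simp
  rw [hyx2]
  have key : x * ((x^3*y*(3+y^2) + 1 + 3*x^2) / ((1+x^2)^2*(1+y^2)^2)) ≤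
      3 * (x/(1+x^2)) + 4 * (y/(1+y^2)) := by
    have ha : x + 3*x^3 ≤ 3*x*(1+x^2)*(1+y^2)^2 := by
      nlinarith [mul_nonneg hx.le (sq_nonneg y),
        mul_nonneg (mul_nonneg hx.le (sq_nonneg y)) (sq_nonneg y),
        mul_nonneg (mul_nonneg (mul_nonneg hx.le (sq_nonneg x)) (sq_nonneg y)) (sq_nonneg y),
        mul_nonneg (mul_nonneg hx.le (sq_nonneg x)) (sq_nonneg y)]
    have hb : 3*x^4*y + x^4*y^3 ≤ 4*y*(1+x^2)^2*(1+y^2) := by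
      nlinarith [mul_nonneg hy.le (sq_nonneg (1-x^2)),
        mul_nonneg (mul_nonneg hy.le (sq_nonneg (1-x^2))) (sq_nonneg y),
        mul_nonneg (mul_nonneg hy.le (sq_nonneg x)) (sq_nonneg y),
        mul_nonneg hy.le (sq_nonneg x),
        mul_nonneg (mul_nonneg hy.le (sq_nonneg x)) (sq_nonneg x)]
    have hineq : x * (x^3*y*(3+y^2) + 1 + 3*x^2) ≤
        (3*x*(1+y^2) + 4*y*(1+x^2)) * ((1+x^2)*(1+y^2)) := by nlinarith [ha, hb]
    calc x * ((x^3*y*(3+y^2) + 1 + 3*x^2) / ((1+x^2)^2*(1+y^2)^2))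
        = (x * (x^3*y*(3+y^2) + 1 + 3*x^2)) / ((1+x^2)^2*(1+y^2)^2) := by ring
      _ ≤ ((3*x*(1+y^2) + 4*y*(1+x^2)) * ((1+x^2)*(1+y^2))) / ((1+x^2)^2*(1+y^2)^2) :=
          (div_le_div_iff_of_pos_right hD).mpr hineq
      _ = 3 * (x/(1+x^2)) + 4 * (y/(1+y^2)) := by field_simp
  calc 16*(k:ℝ)^2*(t^2*x) * ((x^3*y*(3+y^2) + 1 + 3*x^2) / ((1+x^2)^2*(1+y^2)^2))
      = 16*(k:ℝ)^2*t^2 * (x * ((x^3*y*(3+y^2) + 1 + 3*x^2) / ((1+x^2)^2*(1+y^2)^2))) := by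
        ring
    _ ≤ 16*(k:ℝ)^2*t^2 * (3 * (x/(1+x^2)) + 4 * (y/(1+y^2))) :=
        mul_le_mul_of_nonneg_left key (by positivity)

lemma integrableOn_psi (k α : ℕ) (hk : 4 ≤ k) (hα1 : 1 ≤ α) (hα3 : α ≤ 3) :
    IntegrableOn (fun s : ℝ => (s^k/(1+(s^k)^2))^2 / s^(2*α) * s) (Ioi 0) := by
  set m := 2*k+1-2*α with hmdef
  have hρcont : Continuous (fun s : ℝ => s^m/(1+(s^k)^2)^2) := by
    apply Continuous.div (by continuity) (by continuity)
    intro s; positivity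
  have h01 : IntegrableOn (fun s : ℝ => s^m/(1+(s^k)^2)^2) (Ioc 0 1) :=
    (hρcont.integrableOn_Icc).mono_set Ioc_subset_Icc_self
  have h1i : IntegrableOn (fun s : ℝ => s^m/(1+(s^k)^2)^2) (Ioi 1) := by
    have hexp : ((m:ℝ) - 4*k) < -1 := by
      have h1 : m + 1 + 2*k ≤ 4*k := by omega
      have h2 := Nat.cast_le (α := ℝ) |>.mpr h1
      push_cast at h2 ⊢
      nlinarith [Nat.cast_nonneg (α := ℝ) k]
    have hint : IntegrableOn (fun s : ℝ => s ^ ((m:ℝ) - 4*k)) (Ioi 1) :=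
      integrableOn_Ioi_rpow_of_lt hexp one_pos
    refine Integrable.mono hint hρcont.aestronglyMeasurable.restrict ?_
    filter_upwards [ae_restrict_mem measurableSet_Ioi] with s hs
    have hs1 : (1:ℝ) ≤ s := le_of_lt hs
    have hs0 : (0:ℝ) < s := lt_of_lt_of_le one_pos hs1
    rw [Real.norm_eq_abs, Real.norm_eq_abs, abs_of_nonneg (by positivity),
      abs_of_nonneg (by positivity)]
    rw [Real.rpow_sub hs0, Real.rpow_natCast]
    have h4k : s ^ ((4*k : ℕ) : ℝ) = ((s^k)^2)^2 := by
      rw [Real.rpow_natCast, ← pow_mul, ← pow_mul]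
      congr 1; ring
    rw [show ((4:ℝ)*k) = ((4*k : ℕ) : ℝ) by push_cast; ring, h4k]
    gcongr
    nlinarith [sq_nonneg (s^k)]
  have hunion : IntegrableOn (fun s : ℝ => s^m/(1+(s^k)^2)^2) (Ioi 0) := by
    rw [← Ioc_union_Ioi_eq_Ioi (by norm_num : (0:ℝ) ≤ 1)]
    exact h01.union h1i
  refine hunion.congr_fun ?_ measurableSet_Ioi
  intro s hs
  have hs0 : (0:ℝ) < s := hs
  have hd : (0:ℝ) < 1+(s^k)^2 := by positivity
  field_simp
  rw [show (s^k)^2 * s = s^m * s^(2*α) by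
    rw [← pow_mul, ← pow_succ, ← pow_add]; congr 1; omega]

lemma psi_scale_eq (k α : ℕ) {c r : ℝ} (hc : 0 < c) (hr : 0 < r) :
    ((r/c)^k/(1+((r/c)^k)^2))^2 / r^(2*α) * r
      = c^(1 - 2*(α:ℤ)) *
        (((c⁻¹*r)^k/(1+((c⁻¹*r)^k)^2))^2 / (c⁻¹*r)^(2*α) * (c⁻¹*r)) := by
  have hcr : c⁻¹ * r = r / c := by field_simp
  rw [hcr]
  have hz : c^(1 - 2*(α:ℤ)) = c / c^(2*α) := by
    rw [show (1 - 2*(α:ℤ)) = 1 - ((2*α : ℕ) : ℤ) by push_cast; ring,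
      zpow_sub₀ hc.ne', zpow_one, zpow_natCast]
  rw [hz, div_pow r c (2*α)]
  have hd : (0:ℝ) < 1+((r/c)^k)^2 := by positivity
  field_simp

lemma int_scale (k α : ℕ) {c : ℝ} (hc : 0 < c) :
    ∫ r in Ioi (0:ℝ), ((r/c)^k/(1+((r/c)^k)^2))^2 / r^(2*α) * r
      = c^(2 - 2*(α:ℤ)) * ∫ s in Ioi (0:ℝ), (s^k/(1+(s^k)^2))^2 / s^(2*α) * s := by
  have hc' : (0:ℝ) < c⁻¹ := inv_pos.mpr hc
  have step : ∀ r ∈ Ioi (0:ℝ), ((r/c)^k/(1+((r/c)^k)^2))^2 / r^(2*α) * r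
      = c^(1 - 2*(α:ℤ)) *
        (((c⁻¹*r)^k/(1+((c⁻¹*r)^k)^2))^2 / (c⁻¹*r)^(2*α) * (c⁻¹*r)) :=
    fun r hr => psi_scale_eq k α hc hr
  rw [setIntegral_congr_fun measurableSet_Ioi step, integral_const_mul]
  rw [integral_comp_mul_left_Ioi
    (fun s => (s^k/(1+(s^k)^2))^2 / s^(2*α) * s) 0 hc', mul_zero, inv_inv, smul_eq_mul]
  have hcc : c ^ (1 - 2*(α:ℤ)) * c = c ^ (2 - 2*(α:ℤ)) := by
    have h := zpow_add₀ hc.ne' (1 - 2*(α:ℤ)) 1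
    rw [zpow_one] at h
    rw [← h]
    congr 1
    ring
  rw [← mul_assoc, hcc]

lemma integrableOn_psi_scaled (k α : ℕ) (hk : 4 ≤ k) (hα1 : 1 ≤ α) (hα3 : α ≤ 3)
    {c : ℝ} (hc : 0 < c) :
    IntegrableOn (fun r : ℝ => ((r/c)^k/(1+((r/c)^k)^2))^2 / r^(2*α) * r) (Ioi 0) := by
  have hc' : (0:ℝ) < c⁻¹ := inv_pos.mpr hc
  have base := integrableOn_psi k α hk hα1 hα3
  have comp : IntegrableOn (fun r : ℝ =>
      ((c⁻¹*r)^k/(1+((c⁻¹*r)^k)^2))^2 / (c⁻¹*r)^(2*α) * (c⁻¹*r)) (Ioi 0) := by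
    have h := (integrableOn_Ioi_comp_mul_left_iff
      (fun s : ℝ => (s^k/(1+(s^k)^2))^2 / s^(2*α) * s) 0 hc')
    rw [mul_zero] at h
    exact h.mpr base
  have comp2 : IntegrableOn (fun r : ℝ => c^(1 - 2*(α:ℤ)) *
      (((c⁻¹*r)^k/(1+((c⁻¹*r)^k)^2))^2 / (c⁻¹*r)^(2*α) * (c⁻¹*r))) (Ioi 0) :=
    comp.const_mul (c^(1 - 2*(α:ℤ)))
  refine comp2.congr_fun ?_ measurableSet_Ioi
  intro r hr
  exact (psi_scale_eq k α hc hr).symm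


/-- `‖r^{-α} G_{λ,μ}‖_{L²} ≤ C ν^{2k} λ^{1-α}` for `α ∈ {1,2,3}`. -/
theorem stmt5 (k : ℕ) (hk : 4 ≤ k) :
    ∀ α : ℕ, α ∈ ({1, 2, 3} : Set ℕ) →
      ∃ C : ℝ, 0 < C ∧
        ∀ lam mu : ℝ, 0 < lam → 0 < mu → lam / mu ≤ 1 / 2 →
          Real.sqrt (∫ r in Ioi (0 : ℝ), Gfun k lam mu r ^ 2 / r ^ (2 * α) * r)
            ≤ C * (lam / mu) ^ (2 * k) * lam ^ (1 - (α : ℤ)) := by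
  intro α hα
  obtain ⟨hα1, hα3⟩ : 1 ≤ α ∧ α ≤ 3 := by
    simp only [mem_insert_iff, mem_singleton_iff] at hα
    rcases hα with h|h|h <;> omega
  set I := ∫ s in Ioi (0:ℝ), (s^k/(1+(s^k)^2))^2 / s^(2*α) * s with hI
  have hI0 : 0 ≤ I := by
    rw [hI]
    apply setIntegral_nonneg measurableSet_Ioi
    intro s hs
    have hs0 : (0:ℝ) < s := hs
    exact mul_nonneg (div_nonneg (sq_nonneg _) (pow_nonneg hs0.le _)) hs0.le
  refine ⟨Real.sqrt (12800 * (k:ℝ)^4 * I) + 1, by positivity, ?_⟩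
  intro lam mu hl hm hν
  have hν0 : 0 < lam / mu := div_pos hl hm
  have hlm : lam ≤ mu := by
    rw [div_le_iff₀ hm] at hν
    nlinarith
  have ht : (0:ℝ) < ((lam/mu)^k) := pow_pos hν0 k
  have hmono : (∫ r in Ioi (0:ℝ), Gfun k lam mu r ^ 2 / r ^ (2 * α) * r)
      ≤ ∫ r in Ioi (0:ℝ),
        (4608*(k:ℝ)^4*((lam/mu)^k)^4 * (((r/lam)^k/(1+((r/lam)^k)^2))^2 / r^(2*α) * r)
        + 8192*(k:ℝ)^4*((lam/mu)^k)^4 * (((r/mu)^k/(1+((r/mu)^k)^2))^2 / r^(2*α) * r)) := by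
    apply integral_mono_of_nonneg
    · filter_upwards [ae_restrict_mem measurableSet_Ioi] with r hr
      have hr0 : (0:ℝ) < r := hr
      exact mul_nonneg (div_nonneg (sq_nonneg _) (pow_nonneg hr0.le _)) hr0.le
    · exact ((integrableOn_psi_scaled k α hk hα1 hα3 hl).const_mul _).add
        ((integrableOn_psi_scaled k α hk hα1 hα3 hm).const_mul _)
    · filter_upwards [ae_restrict_mem measurableSet_Ioi] with r hr
      have hr0 : (0:ℝ) < r := hr
      have hb := Gfun_bound k hl hm hr0
      set a := (r/lam)^k/(1+((r/lam)^k)^2) with had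
      set b := (r/mu)^k/(1+((r/mu)^k)^2) with hbd
      have ha0 : 0 ≤ a := by
        rw [had]
        exact div_nonneg (pow_nonneg (div_nonneg hr0.le hl.le) k) (by positivity)
      have hb0 : 0 ≤ b := by
        rw [hbd]
        exact div_nonneg (pow_nonneg (div_nonneg hr0.le hm.le) k) (by positivity)
      have hsq : Gfun k lam mu r ^ 2 ≤ (16*(k:ℝ)^2*((lam/mu)^k)^2 * (3*a + 4*b))^2 := by
        rw [← sq_abs]
        exact pow_le_pow_left₀ (abs_nonneg _) hb 2
      have key2 : (16*(k:ℝ)^2*((lam/mu)^k)^2 * (3*a + 4*b))^2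
          ≤ 4608*(k:ℝ)^4*((lam/mu)^k)^4*a^2 + 8192*(k:ℝ)^4*((lam/mu)^k)^4*b^2 := by
        nlinarith [mul_nonneg (mul_nonneg (by positivity : (0:ℝ) ≤ 256*(k:ℝ)^4)
          (pow_nonneg ht.le 4)) (sq_nonneg (3*a - 4*b))]
      calc Gfun k lam mu r ^ 2 / r ^ (2*α) * r
          ≤ (4608*(k:ℝ)^4*((lam/mu)^k)^4*a^2 + 8192*(k:ℝ)^4*((lam/mu)^k)^4*b^2)
              / r^(2*α) * r := by
            apply mul_le_mul_of_nonneg_right _ hr0.le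
            exact (div_le_div_iff_of_pos_right (pow_pos hr0 (2*α))).mpr (hsq.trans key2)
        _ = 4608*(k:ℝ)^4*((lam/mu)^k)^4 * (a^2 / r^(2*α) * r)
            + 8192*(k:ℝ)^4*((lam/mu)^k)^4 * (b^2 / r^(2*α) * r) := by ring
  have hIg : (∫ r in Ioi (0:ℝ),
        (4608*(k:ℝ)^4*((lam/mu)^k)^4 * (((r/lam)^k/(1+((r/lam)^k)^2))^2 / r^(2*α) * r)
        + 8192*(k:ℝ)^4*((lam/mu)^k)^4 * (((r/mu)^k/(1+((r/mu)^k)^2))^2 / r^(2*α) * r)))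
      = 4608*(k:ℝ)^4*((lam/mu)^k)^4 * (lam^(2-2*(α:ℤ)) * I)
        + 8192*(k:ℝ)^4*((lam/mu)^k)^4 * (mu^(2-2*(α:ℤ)) * I) := by
    rw [integral_add ((integrableOn_psi_scaled k α hk hα1 hα3 hl).const_mul _)
        ((integrableOn_psi_scaled k α hk hα1 hα3 hm).const_mul _),
      integral_const_mul, integral_const_mul, int_scale k α hl, int_scale k α hm, hI]
  have hmu_le : mu^(2-2*(α:ℤ)) ≤ lam^(2-2*(α:ℤ)) := by
    have hn : (2 - 2*(α:ℤ)) = -(((2*α-2 : ℕ)) : ℤ) := by omega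
    rw [hn, zpow_neg, zpow_neg, zpow_natCast, zpow_natCast]
    exact inv_anti₀ (pow_pos hl _) (pow_le_pow_left₀ hl.le hlm _)
  have hbig : (∫ r in Ioi (0:ℝ), Gfun k lam mu r ^ 2 / r ^ (2 * α) * r)
      ≤ 12800*(k:ℝ)^4*((lam/mu)^k)^4 * (lam^(2-2*(α:ℤ)) * I) := by
    rw [hIg] at hmono
    refine hmono.trans ?_
    have h8 : 8192*(k:ℝ)^4*((lam/mu)^k)^4 * (mu^(2-2*(α:ℤ)) * I)
        ≤ 8192*(k:ℝ)^4*((lam/mu)^k)^4 * (lam^(2-2*(α:ℤ)) * I) :=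
      mul_le_mul_of_nonneg_left (mul_le_mul_of_nonneg_right hmu_le hI0) (by positivity)
    linarith
  have hE : 12800*(k:ℝ)^4*((lam/mu)^k)^4 * (lam^(2-2*(α:ℤ)) * I)
      = (12800*(k:ℝ)^4*I) * (((lam/mu)^(2*k)) * lam^(1-(α:ℤ)))^2 := by
    have hzz : (lam^(1-(α:ℤ)))^2 = lam^(2-2*(α:ℤ)) := by
      rw [pow_two, ← zpow_add₀ hl.ne']
      congr 1
      ring
    have hνν : ((lam/mu)^(2*k))^2 = ((lam/mu)^k)^4 := by
      rw [← pow_mul, ← pow_mul]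
      congr 1
      ring
    rw [mul_pow, hzz, hνν]
    ring
  have hpos : (0:ℝ) < ((lam/mu)^(2*k)) * lam^(1-(α:ℤ)) :=
    mul_pos (pow_pos hν0 _) (zpow_pos hl _)
  calc Real.sqrt (∫ r in Ioi (0:ℝ), Gfun k lam mu r ^ 2 / r ^ (2 * α) * r)
      ≤ Real.sqrt ((12800*(k:ℝ)^4*I) * (((lam/mu)^(2*k)) * lam^(1-(α:ℤ)))^2) := by
        apply Real.sqrt_le_sqrt
        rw [← hE]
        exact hbig
    _ = Real.sqrt (12800*(k:ℝ)^4*I) * (((lam/mu)^(2*k)) * lam^(1-(α:ℤ))) := by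
        rw [Real.sqrt_mul (by positivity), Real.sqrt_sq hpos.le]
    _ ≤ (Real.sqrt (12800*(k:ℝ)^4*I) + 1) * ((lam/mu)^(2*k)) * lam^(1-(α:ℤ)) := by
        nlinarith [Real.sqrt_nonneg (12800*(k:ℝ)^4*I)]

end
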